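/- There do not exist real numbers $c_4, c_{21}, c_{12}$ such that, in the Pöppe algebra of compositions, $c_4\cdot\widehat{\underline{4}} + c_{21}\cdot\widehat{\underline{2}}*\widehat{\underline{1}} + c_{12}\cdot\widehat{\underline{1}}*\widehat{\underline{2}}$ equals the single-letter composition $4$. That is, the fourth-order (even) member of the hierarchy admits no Pöppe polynomial expansion. -/

import Mathlib

open Finset

/-- The set of compositions of `n` (lists of positive integers summing to `n`). -/
def comps : ℕ → Finset (List ℕ+)
  | 0 => {[]}
  | n + 1 =>
    (Finset.range (n + 1)).attach.biUnion fun k =>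
      (comps k.1).image fun l =>
        (⟨n + 1 - k.1, Nat.sub_pos_of_lt (Finset.mem_range.mp k.2)⟩ : ℕ+) :: l
  decreasing_by exact Finset.mem_range.mp k.2

/-- Signature character of a composition. -/
def chi : List ℕ+ → ℕ
  | [] => 1
  | a :: t => Nat.choose ((a : ℕ) + (t.map fun x => (x : ℕ)).sum) (a : ℕ) * chi t

/-- The Pöppe product of two basis compositions `u a` and `b v`:
`(u a) * (b v) = u(a+1)bv + ua(b+1)v + 2·(ua1bv)`, as an element of the free
vector space on compositions (zero if either composition is empty). -/
noncomputable def ppWord (u v : List ℕ+) : List ℕ+ →₀ ℝ :=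
  match u.reverse, v with
  | a :: ur, b :: v' =>
      Finsupp.single (((a + 1) :: ur).reverse ++ b :: v') 1
      + Finsupp.single ((a :: ur).reverse ++ (b + 1) :: v') 1
      + (2 : ℝ) • Finsupp.single ((a :: ur).reverse ++ (1 : ℕ+) :: b :: v') 1
  | _, _ => 0

/-- The bilinear Pöppe product on the free vector space on compositions. -/
noncomputable def poppeMul (x y : List ℕ+ →₀ ℝ) : List ℕ+ →₀ ℝ :=
  x.sum fun u cu => y.sum fun v cv => (cu * cv) • ppWord u v

/-- The signature expansion of order `n`: `∑_{w ⊨ n} χ(w)·w`. -/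
noncomputable def sigExp (n : ℕ) : List ℕ+ →₀ ℝ :=
  ∑ w ∈ comps n, (chi w : ℝ) • Finsupp.single w 1

/-- The derivation of a single composition: the sum of all single-letter increments
plus the sum of all insertions of a letter `1` into the gaps. -/
noncomputable def derWord (w : List ℕ+) : List ℕ+ →₀ ℝ :=
  (∑ k ∈ Finset.range w.length,
      Finsupp.single (w.take k ++ (w.getD k 1 + 1) :: w.drop (k + 1)) (1 : ℝ))
  + ∑ k ∈ Finset.range (w.length + 1),
      Finsupp.single (w.take k ++ (1 : ℕ+) :: w.drop k) (1 : ℝ)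

/-- The derivation, extended linearly to the free vector space on compositions. -/
noncomputable def der (x : List ℕ+ →₀ ℝ) : List ℕ+ →₀ ℝ :=
  x.sum fun w c => c • derWord w


-- Auxiliary lemmas
lemma comps0 : comps 0 = {[]} := by rw [comps]

lemma mem_comps_cons {n : ℕ} {k : ℕ} (hk : k < n + 1) {l : List ℕ+} (hl : l ∈ comps k) :
    (⟨n + 1 - k, Nat.sub_pos_of_lt hk⟩ : ℕ+) :: l ∈ comps (n + 1) := by
  rw [comps]
  exact Finset.mem_biUnion.mpr ⟨⟨k, Finset.mem_range.mpr hk⟩, Finset.mem_attach _ _,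
    Finset.mem_image.mpr ⟨l, hl, rfl⟩⟩

lemma comps1 : comps 1 = {[(1:ℕ+)]} := by
  rw [comps]
  ext w
  simp only [Finset.mem_biUnion, Finset.mem_attach, true_and, Finset.mem_image,
    Finset.mem_singleton]
  constructor
  · rintro ⟨⟨k, hk⟩, l, hl, rfl⟩
    obtain rfl : k = 0 := by simpa [Nat.lt_one_iff] using hk
    rw [comps0] at hl; simp at hl; subst hl; rfl
  · rintro rfl
    exact ⟨⟨0, by norm_num⟩, [], by rw [comps0]; simp, rfl⟩

lemma comps2 : comps 2 = {[(2:ℕ+)], [(1:ℕ+),(1:ℕ+)]} := by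
  rw [comps]
  ext w
  simp only [Finset.mem_biUnion, Finset.mem_attach, true_and, Finset.mem_image,
    Finset.mem_insert, Finset.mem_singleton]
  constructor
  · rintro ⟨⟨k, hk⟩, l, hl, rfl⟩
    have hk' := Finset.mem_range.mp hk
    interval_cases k
    · rw [comps0] at hl; simp at hl; subst hl; left; rfl
    · rw [comps1] at hl; simp at hl; subst hl; right; rfl
  · rintro (rfl | rfl)
    · exact ⟨⟨0, by norm_num⟩, [], by rw [comps0]; simp, rfl⟩
    · exact ⟨⟨1, by norm_num⟩, [(1:ℕ+)], by rw [comps1]; simp, rfl⟩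

lemma mem4 : [(4:ℕ+)] ∈ comps 4 := by
  have := mem_comps_cons (n := 3) (k := 0) (by norm_num) (l := []) (by rw [comps0]; simp)
  exact this

lemma mem31 : [(3:ℕ+),(1:ℕ+)] ∈ comps 4 := by
  have := mem_comps_cons (n := 3) (k := 1) (by norm_num) (l := [(1:ℕ+)])
    (by rw [comps1]; simp)
  exact this

lemma mem13 : [(1:ℕ+),(3:ℕ+)] ∈ comps 4 := by
  have h3 : [(3:ℕ+)] ∈ comps 3 := by
    have := mem_comps_cons (n := 2) (k := 0) (by norm_num) (l := []) (by rw [comps0]; simp)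
    exact this
  have := mem_comps_cons (n := 3) (k := 3) (by norm_num) h3
  exact this

lemma mem22 : [(2:ℕ+),(2:ℕ+)] ∈ comps 4 := by
  have := mem_comps_cons (n := 3) (k := 2) (by norm_num) (l := [(2:ℕ+)])
    (by rw [comps2]; simp)
  exact this

lemma sigExp_apply (n : ℕ) (w : List ℕ+) :
    sigExp n w = if w ∈ comps n then (chi w : ℝ) else 0 := by
  unfold sigExp
  rw [Finsupp.finset_sum_apply]
  simp only [Finsupp.smul_apply, Finsupp.single_apply, smul_eq_mul]
  rw [Finset.sum_congr rfl (fun w' _ => by rw [mul_ite, mul_one, mul_zero]),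
    Finset.sum_ite_eq' (comps n) w (fun w' => (chi w' : ℝ))]

lemma poppeMul_single (u v : List ℕ+) (a b : ℝ) :
    poppeMul (Finsupp.single u a) (Finsupp.single v b) = (a * b) • ppWord u v := by
  unfold poppeMul
  rw [Finsupp.sum_single_index, Finsupp.sum_single_index]
  · simp
  · simp [Finsupp.sum_single_index]

lemma poppeMul_add_left (x x' y : List ℕ+ →₀ ℝ) :
    poppeMul (x + x') y = poppeMul x y + poppeMul x' y := by
  unfold poppeMul
  rw [Finsupp.sum_add_index']
  · intro u; simp
  · intro u b1 b2
    rw [← Finsupp.sum_add]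
    congr 1; ext v cv
    rw [add_mul, add_smul]

lemma sig1 : sigExp 1 = Finsupp.single [(1:ℕ+)] 1 := by
  unfold sigExp
  rw [comps1, Finset.sum_singleton]
  norm_num [chi]

lemma sig2 : sigExp 2 = Finsupp.single [(2:ℕ+)] 1 + Finsupp.single [(1:ℕ+),(1:ℕ+)] 2 := by
  unfold sigExp
  rw [comps2]
  rw [Finset.sum_insert (by simp), Finset.sum_singleton]
  have h1 : chi [(2:ℕ+)] = 1 := by decide
  have h2 : chi [(1:ℕ+),(1:ℕ+)] = 2 := by decide
  rw [h1, h2]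
  simp [Finsupp.smul_single]

lemma pm21 : poppeMul (sigExp 2) (sigExp 1)
    = ppWord [(2:ℕ+)] [(1:ℕ+)] + (2:ℝ) • ppWord [(1:ℕ+),(1:ℕ+)] [(1:ℕ+)] := by
  rw [sig2, sig1, poppeMul_add_left, poppeMul_single, poppeMul_single]
  norm_num

lemma pm12 : poppeMul (sigExp 1) (sigExp 2)
    = ppWord [(1:ℕ+)] [(2:ℕ+)] + (2:ℝ) • ppWord [(1:ℕ+)] [(1:ℕ+),(1:ℕ+)] := by
  rw [sig2, sig1]
  unfold poppeMul
  rw [Finsupp.sum_single_index]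
  · rw [Finsupp.sum_add_index' (by intro v; simp)
      (by intro v b1 b2; rw [mul_add, add_smul])]
    rw [Finsupp.sum_single_index (by simp), Finsupp.sum_single_index (by simp)]
    norm_num
  · simp [Finsupp.sum_add_index']

lemma pp_a : ppWord [(2:ℕ+)] [(1:ℕ+)]
    = Finsupp.single [(3:ℕ+),(1:ℕ+)] 1 + Finsupp.single [(2:ℕ+),(2:ℕ+)] 1
      + (2:ℝ) • Finsupp.single [(2:ℕ+),(1:ℕ+),(1:ℕ+)] 1 := rfl

lemma pp_b : ppWord [(1:ℕ+),(1:ℕ+)] [(1:ℕ+)]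
    = Finsupp.single [(1:ℕ+),(2:ℕ+),(1:ℕ+)] 1 + Finsupp.single [(1:ℕ+),(1:ℕ+),(2:ℕ+)] 1
      + (2:ℝ) • Finsupp.single [(1:ℕ+),(1:ℕ+),(1:ℕ+),(1:ℕ+)] 1 := rfl

lemma pp_c : ppWord [(1:ℕ+)] [(2:ℕ+)]
    = Finsupp.single [(2:ℕ+),(2:ℕ+)] 1 + Finsupp.single [(1:ℕ+),(3:ℕ+)] 1
      + (2:ℝ) • Finsupp.single [(1:ℕ+),(1:ℕ+),(2:ℕ+)] 1 := rfl

lemma pp_d : ppWord [(1:ℕ+)] [(1:ℕ+),(1:ℕ+)]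
    = Finsupp.single [(2:ℕ+),(1:ℕ+),(1:ℕ+)] 1 + Finsupp.single [(1:ℕ+),(2:ℕ+),(1:ℕ+)] 1
      + (2:ℝ) • Finsupp.single [(1:ℕ+),(1:ℕ+),(1:ℕ+),(1:ℕ+)] 1 := rfl

/-- The fourth-order (even) member of the hierarchy admits no Pöppe polynomial
expansion: no real `c₄, c₂₁, c₁₂` satisfy
`c₄·4̂ + c₂₁·2̂*1̂ + c₁₂·1̂*2̂ = 4`. -/
theorem no_fourth_order_poppe_polynomial :
    ¬ ∃ c4 c21 c12 : ℝ,
      c4 • sigExp 4 + c21 • poppeMul (sigExp 2) (sigExp 1)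
          + c12 • poppeMul (sigExp 1) (sigExp 2)
        = Finsupp.single [(4 : ℕ+)] 1 := by
  rintro ⟨c4, c21, c12, h⟩
  have h4 := DFunLike.congr_fun h [(4:ℕ+)]
  have h31 := DFunLike.congr_fun h [(3:ℕ+),(1:ℕ+)]
  have h13 := DFunLike.congr_fun h [(1:ℕ+),(3:ℕ+)]
  have h22 := DFunLike.congr_fun h [(2:ℕ+),(2:ℕ+)]
  simp only [pm21, pm12, pp_a, pp_b, pp_c, pp_d, Finsupp.add_apply, Finsupp.smul_apply,
    sigExp_apply, Finsupp.single_apply, smul_eq_mul] at h4 h31 h13 h22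
  rw [if_pos mem4] at h4
  rw [if_pos mem31] at h31
  rw [if_pos mem13] at h13
  rw [if_pos mem22] at h22
  have e4 : chi [(4:ℕ+)] = 1 := by decide
  have e31 : chi [(3:ℕ+),(1:ℕ+)] = 4 := by decide
  have e13 : chi [(1:ℕ+),(3:ℕ+)] = 4 := by decide
  have e22 : chi [(2:ℕ+),(2:ℕ+)] = 6 := by decide
  rw [e4] at h4; rw [e31] at h31; rw [e13] at h13; rw [e22] at h22
  norm_num at h4 h31 h13 h22
  linarith
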